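/- Let F ∈ C²(ℝ) be nonnegative with F'' ≥ −c̃ (c̃ ≥ 0) and suppose |F''(r)| ≤ C_F(1 + F(r)) for all r ∈ ℝ. With the Yosida setup (F̃ = F + (c̃/2)(·)², J_δ, F''_δ(s) = J'_δ(s)F''(J_δ(s)) + c̃(J'_δ(s)−1)), one has, for every δ > 0 and s ∈ ℝ, the δ-independent bound |F''_δ(s)| ≤ C_F·F(s) + (C_F·c̃/2)·s² + C_F + 2c̃. -/

import Mathlib

/-- δ-independent bound on `F''_δ` under `|F''(r)| ≤ C_F(1 + F(r))`:
`|F''_δ(s)| ≤ C_F·F(s) + (C_F·c̃/2)s² + C_F + 2c̃`. -/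
theorem regularized_second_derivative_uniform_bound
    (ct CF : ℝ) (hct : 0 ≤ ct) (hCF : 0 < CF)
    (F : ℝ → ℝ) (hF : ContDiff ℝ 2 F) (hFnonneg : ∀ x, 0 ≤ F x)
    (hF'' : ∀ r, -ct ≤ deriv (deriv F) r)
    (hF''bd : ∀ r, |deriv (deriv F) r| ≤ CF * (1 + F r))
    (δ : ℝ) (hδ : 0 < δ) (J : ℝ → ℝ)
    (hJ : ∀ x, J x + δ * deriv (fun s => F s + ct / 2 * s ^ 2) (J x) = x)
    (hJdiff : Differentiable ℝ J) (hJ' : ∀ s, deriv J s ∈ Set.Ioc (0:ℝ) 1) :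
    ∀ s : ℝ,
      |deriv J s * deriv (deriv F) (J s) + ct * (deriv J s - 1)| ≤
        CF * F s + CF * ct / 2 * s ^ 2 + CF + 2 * ct := by
  intro s
  set G : ℝ → ℝ := fun s => F s + ct / 2 * s ^ 2 with hGdef
  have hFdiff : Differentiable ℝ F := hF.differentiable (by norm_num)
  have hdF : Differentiable ℝ (deriv F) := by
    have h1 := (contDiff_succ_iff_deriv.mp (show ContDiff ℝ (1+1) F from hF)).2.2
    exact h1.differentiable (by norm_num)
  have hG' : deriv G = fun x => deriv F x + ct * x := by
    funext x
    have h1 : HasDerivAt (fun s : ℝ => ct / 2 * s ^ 2) (ct / 2 * (2 * x)) x := by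
      simpa using ((hasDerivAt_pow 2 x).const_mul (ct / 2))
    have h2 : HasDerivAt G (deriv F x + ct / 2 * (2 * x)) x :=
      (hFdiff x).hasDerivAt.add h1
    rw [h2.deriv]; ring
  have hGdiff : Differentiable ℝ G := by
    intro x
    exact (hFdiff x).add ((differentiable_const _).mul (differentiable_pow 2) x)
  have hdGdiff : Differentiable ℝ (deriv G) := by
    rw [hG']
    exact hdF.add ((differentiable_const _).mul differentiable_id)
  have hG'' : ∀ x, deriv (deriv G) x = deriv (deriv F) x + ct := by
    intro x
    rw [hG']
    have h1 : HasDerivAt (fun x : ℝ => ct * x) ct x := by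
      simpa using (hasDerivAt_id x).const_mul ct
    have h2 : HasDerivAt (fun x => deriv F x + ct * x) (deriv (deriv F) x + ct) x :=
      (hdF x).hasDerivAt.add h1
    exact h2.deriv
  have hmono : Monotone (deriv G) := by
    apply monotone_of_deriv_nonneg hdGdiff
    intro x
    rw [hG'' x]
    linarith [hF'' x]
  -- key : G (J s) ≤ G s
  have hJs : s - J s = δ * deriv G (J s) := by linarith [hJ s]
  have key : G (J s) ≤ G s := by
    rcases lt_trichotomy (J s) s with h | h | h
    · -- J s < s, so deriv G (J s) ≥ 0
      have hd0 : 0 ≤ deriv G (J s) := by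
        nlinarith
      obtain ⟨c, hc, hceq⟩ := exists_deriv_eq_slope G h hGdiff.continuous.continuousOn
        (fun x _ => (hGdiff x).differentiableWithinAt)
      have h1 : deriv G (J s) ≤ deriv G c := hmono hc.1.le
      have : 0 ≤ (G s - G (J s)) / (s - J s) := by rw [← hceq]; linarith
      have hpos : 0 < s - J s := by linarith
      have h3 := mul_le_mul_of_nonneg_right this hpos.le
      rw [zero_mul, div_mul_cancel₀ _ hpos.ne'] at h3
      linarith
    · rw [h]
    · -- s < J s, deriv G (J s) ≤ 0
      have hd0 : deriv G (J s) ≤ 0 := by nlinarith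
      obtain ⟨c, hc, hceq⟩ := exists_deriv_eq_slope G h hGdiff.continuous.continuousOn
        (fun x _ => (hGdiff x).differentiableWithinAt)
      have h1 : deriv G c ≤ deriv G (J s) := hmono hc.2.le
      have : (G (J s) - G s) / (J s - s) ≤ 0 := by rw [← hceq]; linarith
      have hpos : 0 < J s - s := by linarith
      have h3 := mul_le_mul_of_nonneg_right this hpos.le
      rw [zero_mul, div_mul_cancel₀ _ hpos.ne'] at h3
      linarith
  have hFJ : F (J s) ≤ F s + ct / 2 * s ^ 2 := by
    have h1 : F (J s) ≤ G (J s) := by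
      simp only [hGdef]
      nlinarith [sq_nonneg (J s)]
    calc F (J s) ≤ G (J s) := h1
    _ ≤ G s := key
    _ = F s + ct / 2 * s ^ 2 := rfl
  -- final estimates
  obtain ⟨hJ'pos, hJ'le⟩ := hJ' s
  have hb1 : |deriv J s * deriv (deriv F) (J s)| ≤ CF * (1 + F (J s)) := by
    rw [abs_mul]
    calc |deriv J s| * |deriv (deriv F) (J s)| ≤ 1 * |deriv (deriv F) (J s)| := by
          apply mul_le_mul_of_nonneg_right _ (abs_nonneg _)
          rw [abs_of_pos hJ'pos]; exact hJ'le
    _ = |deriv (deriv F) (J s)| := one_mul _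
    _ ≤ CF * (1 + F (J s)) := hF''bd _
  have hb2 : |ct * (deriv J s - 1)| ≤ ct := by
    rw [abs_mul, abs_of_nonneg hct]
    have : |deriv J s - 1| ≤ 1 := by
      rw [abs_le]; constructor <;> linarith
    nlinarith
  calc |deriv J s * deriv (deriv F) (J s) + ct * (deriv J s - 1)|
      ≤ |deriv J s * deriv (deriv F) (J s)| + |ct * (deriv J s - 1)| := abs_add_le _ _
    _ ≤ CF * (1 + F (J s)) + ct := add_le_add hb1 hb2
    _ ≤ CF * (1 + (F s + ct / 2 * s ^ 2)) + ct := by nlinarith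
    _ ≤ CF * F s + CF * ct / 2 * s ^ 2 + CF + 2 * ct := by nlinarith
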